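/- Let m ≡ 2 (mod 4), n = 2m, u ∈ F_16 \ F_4 with u^5 = 1. For every s ∈ GF(2^m) there exists b ∈ GF(2^n)* with b^(2^m − 1) ≠ u^4 such that s·Tr^n_m(b(u^4 + 1)) = w^2·Tr^n_m(b(u + 1)), where w = u + u^4. Equivalently, the equation b(u^4 s + s + u^4 + u^2) = b^(2^m)(u s + s + u^3 + u) has a solution b ∈ GF(2^n)*. -/
import Mathlib


/-- Let `m ≡ 2 (mod 4)`, `n = 2m`, `u ∈ F₁₆ \ F₄` with `u⁵ = 1` and `w = u + u⁴`.
For every `s ∈ GF(2^m)` there exists `b ∈ GF(2^n)*` with `b^(2^m − 1) ≠ u⁴` such that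
`s·Tr^n_m(b(u⁴ + 1)) = w²·Tr^n_m(b(u + 1))`. -/
theorem stmt_14 (m : ℕ) (hm : m % 4 = 2) (F : Type*) [Field F] [Fintype F]
    (hcard : Fintype.card F = 2 ^ (2 * m))
    (u : F) (hu16 : u ^ (2 ^ 4) = u) (hu4 : u ^ (2 ^ 2) ≠ u) (hu5 : u ^ 5 = 1)
    (w : F) (hw : w = u + u ^ 4) :
    ∀ s : F, s ^ (2 ^ m) = s →
      ∃ b : F, b ≠ 0 ∧ b ^ (2 ^ m - 1) ≠ u ^ 4 ∧
        s * (b * (u ^ 4 + 1) + (b * (u ^ 4 + 1)) ^ (2 ^ m)) =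
          w ^ 2 * (b * (u + 1) + (b * (u + 1)) ^ (2 ^ m)) := by
  -- characteristic 2
  have hpchar : ringChar F = 2 := by
    obtain ⟨n, hp, hc⟩ := FiniteField.card F (ringChar F)
    have hdvd : ringChar F ∣ 2 ^ (2 * m) := by
      rw [← hcard, hc]
      exact dvd_pow_self _ (by positivity)
    exact (Nat.prime_dvd_prime_iff_eq hp Nat.prime_two).mp (hp.dvd_of_dvd_pow hdvd)
  haveI hC2 : CharP F 2 := hpchar ▸ ringChar.charP F
  haveI : Fact (Nat.Prime 2) := ⟨Nat.prime_two⟩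
  have h2 : (2 : F) = 0 := by exact_mod_cast CharP.cast_eq_zero F 2
  have hfrob : ∀ x y : F, (x + y) ^ (2 ^ m) = x ^ (2 ^ m) + y ^ (2 ^ m) :=
    fun x y => add_pow_char_pow x y 2 m
  -- u ≠ 0, u+1 ≠ 0
  have hu0 : u ≠ 0 := by intro h; rw [h] at hu5; simp at hu5
  have hune : u + 1 ≠ 0 := by
    intro h
    apply hu4
    have hu1 : u = 1 := by linear_combination h - h2
    rw [hu1]; norm_num
  -- sum of 5th roots of unity
  have hsum : u ^ 4 + u ^ 3 + u ^ 2 + u + 1 = 0 := by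
    have h1 : (u + 1) * (u ^ 4 + u ^ 3 + u ^ 2 + u + 1) = 0 := by
      linear_combination hu5 + (u ^ 4 + u ^ 3 + u ^ 2 + u + 1) * h2
    rcases mul_eq_zero.mp h1 with h | h
    · exact absurd h hune
    · exact h
  -- w facts
  have hw2 : w ^ 2 = w + 1 := by
    rw [hw]; linear_combination (u ^ 3 + 2) * hu5 + hsum - (u ^ 4 + u) * h2
  have hwne : w ≠ 0 := by
    intro h; rw [h] at hw2; norm_num at hw2
  -- Frobenius on u
  have h16k : ∀ k : ℕ, u ^ (2 : ℕ) ^ (4 * k) = u := by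
    intro k
    induction k with
    | zero => simp
    | succ k ih =>
      have he : (2 : ℕ) ^ (4 * (k + 1)) = 2 ^ (4 * k) * 2 ^ 4 := by
        rw [← pow_add]; ring_nf
      rw [he, pow_mul, ih, hu16]
  have huq : u ^ (2 : ℕ) ^ m = u ^ 4 := by
    have he : (2 : ℕ) ^ m = 2 ^ (4 * (m / 4)) * 2 ^ 2 := by
      rw [← pow_add]; congr 1; omega
    rw [he, pow_mul, h16k]
    norm_num
  have hu4q : (u ^ 4) ^ (2 : ℕ) ^ m = u := by
    rw [← pow_right_comm, huq]
    have : (u ^ 4) ^ 4 = u ^ 2 ^ 4 := by norm_num [← pow_mul]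
    rw [this, hu16]
  have hwq : w ^ (2 : ℕ) ^ m = w := by
    rw [hw, hfrob, huq, hu4q, add_comm]
  have hw2q : (w ^ 2) ^ (2 : ℕ) ^ m = w ^ 2 := by
    rw [pow_right_comm, hwq]
  intro s hs
  set A : F := s * (u ^ 4 + 1) + w ^ 2 * (u + 1) with hAdef
  set B : F := s * (u + 1) + w ^ 2 * (u ^ 4 + 1) with hBdef
  have hAq : A ^ (2 : ℕ) ^ m = B := by
    rw [hAdef, hBdef, hfrob, mul_pow, mul_pow, hfrob, hfrob, one_pow, hu4q, huq, hs, hw2q]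
  have key : A + u ^ 4 * B = w ^ 2 * u ^ 2 := by
    rw [hAdef, hBdef]
    linear_combination (s + w ^ 2 * u ^ 3) * hu5 + w ^ 2 * hsum +
      (s * u ^ 4 + s - w ^ 2 * u ^ 2) * h2
  have hwu : w ^ 2 * u ^ 2 ≠ 0 := mul_ne_zero (pow_ne_zero _ hwne) (pow_ne_zero _ hu0)
  have hA : A ≠ 0 := by
    intro h
    have hB : B = 0 := by
      rw [← hAq, h, zero_pow]; positivity
    rw [h, hB] at key
    exact hwu (by linear_combination -key)
  have hB_eq : B = A ^ (2 : ℕ) ^ m := hAq.symm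
  have hBne : B ≠ 0 := hB_eq ▸ pow_ne_zero _ hA
  refine ⟨A⁻¹, inv_ne_zero hA, ?_, ?_⟩
  · -- b ^ (2^m - 1) ≠ u^4
    intro h
    have hinv : (A ^ (2 ^ m - 1))⁻¹ = u ^ 4 := by rw [← inv_pow]; exact h
    have hAp : A ^ (2 ^ m - 1) = u := by
      have h45 : u ^ 4 * u = 1 := by rw [← pow_succ]; exact hu5
      rw [inv_eq_iff_eq_inv] at hinv
      rw [hinv]
      exact inv_eq_of_mul_eq_one_right h45
    have hBu : B = u * A := by
      rw [hB_eq, ← Nat.sub_add_cancel (Nat.one_le_two_pow (n := m)), pow_succ, hAp]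
    have hz : w ^ 2 * u ^ 2 = 0 := by
      linear_combination -key + u ^ 4 * hBu + A * hu5 + A * h2
    exact hwu hz
  · have e1 : (A⁻¹ * (u ^ 4 + 1)) ^ (2 : ℕ) ^ m = (A⁻¹) ^ (2 : ℕ) ^ m * (u + 1) := by
      rw [mul_pow, hfrob, hu4q, one_pow]
    have e2 : (A⁻¹ * (u + 1)) ^ (2 : ℕ) ^ m = (A⁻¹) ^ (2 : ℕ) ^ m * (u ^ 4 + 1) := by
      rw [mul_pow, hfrob, huq, one_pow]
    rw [e1, e2]
    have hbA : A⁻¹ * A = 1 := inv_mul_cancel₀ hA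
    have hbB : (A⁻¹) ^ (2 : ℕ) ^ m * B = 1 := by
      rw [inv_pow, hB_eq]
      exact inv_mul_cancel₀ (pow_ne_zero _ hA)
    linear_combination hbA - hbB - A⁻¹ * hAdef + (A⁻¹) ^ (2 : ℕ) ^ m * hBdef +
      (s * (A⁻¹) ^ (2 : ℕ) ^ m * (u + 1) - w ^ 2 * A⁻¹ * (u + 1)) * h2
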